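/- Let ℓ ≥ 1 and J ⊆ ℤ/ℓℤ. If μ is a partition that is a J-core, then Core_ℓ(μ) is also a J-core. -/

import Mathlib

namespace CM

/-- The `∞`-residue of a box. -/
def rsd (c : ℕ × ℕ) : ℤ := (c.2 : ℤ) - (c.1 : ℤ)

/-- The `ℓ`-residue of a box. -/
def res (ℓ : ℕ) (c : ℕ × ℕ) : ZMod ℓ := (rsd c : ZMod ℓ)

/-- `Res_ℓ(μ) ∈ ℤ^(ℤ/ℓℤ)`: the number of boxes of each `ℓ`-residue. -/
def Res (ℓ : ℕ) (μ : YoungDiagram) : ZMod ℓ → ℤ := fun i =>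
  ((μ.cells.filter (fun c => res ℓ c = i)).card : ℤ)

/-- The constant vector `δ_ℓ = (1,…,1)`. -/
def delta (ℓ : ℕ) : ZMod ℓ → ℤ := fun _ => 1

/-- A box is removable if deleting it leaves a Young diagram. -/
def IsRemovable (μ : YoungDiagram) (c : ℕ × ℕ) : Prop :=
  c ∈ μ.cells ∧ ∃ ν : YoungDiagram, ν.cells = μ.cells.erase c

/-- A box is addable if adjoining it yields a Young diagram. -/
def IsAddable (μ : YoungDiagram) (c : ℕ × ℕ) : Prop :=
  c ∉ μ.cells ∧ ∃ ν : YoungDiagram, ν.cells = insert c μ.cells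

/-- One step: delete one removable box. -/
def RemoveStep (μ ν : YoungDiagram) : Prop :=
  ∃ c, IsRemovable μ c ∧ ν.cells = μ.cells.erase c

/-- `ν` is obtainable from `μ` by successively deleting removable boxes. -/
def Obtainable (μ ν : YoungDiagram) : Prop :=
  Relation.ReflTransGen RemoveStep μ ν

/-- `λ` is an `ℓ`-core: no partition obtainable from `λ` by deleting removable boxes
differs from `λ` by exactly `ℓ` boxes of pairwise distinct `ℓ`-residues. -/
def IsCore (ℓ : ℕ) (lam : YoungDiagram) : Prop :=
  ¬ ∃ μ : YoungDiagram, Obtainable lam μ ∧ (lam.cells \ μ.cells).card = ℓ ∧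
      Set.InjOn (res ℓ) ↑(lam.cells \ μ.cells)

/-- One step of the `ℓ`-core process: delete (via removable-box deletions) `ℓ` boxes
of pairwise distinct `ℓ`-residues. -/
def CoreStep (ℓ : ℕ) (μ ν : YoungDiagram) : Prop :=
  Obtainable μ ν ∧ (μ.cells \ ν.cells).card = ℓ ∧
    Set.InjOn (res ℓ) ↑(μ.cells \ ν.cells)

/-- `ν` is the `ℓ`-core of `λ`: it is an `ℓ`-core reached from `λ` by the core process. -/
def ReachesCore (ℓ : ℕ) (lam ν : YoungDiagram) : Prop :=
  Relation.ReflTransGen (CoreStep ℓ) lam ν ∧ IsCore ℓ ν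

/-- A `J`-removable box: a removable box whose `ℓ`-residue lies in `J`. -/
def IsJRemovable (ℓ : ℕ) (J : Set (ZMod ℓ)) (μ : YoungDiagram) (c : ℕ × ℕ) : Prop :=
  IsRemovable μ c ∧ res ℓ c ∈ J

/-- A `J`-core: a partition with no `J`-removable boxes. -/
def IsJCore (ℓ : ℕ) (J : Set (ZMod ℓ)) (μ : YoungDiagram) : Prop :=
  ∀ c, ¬ IsJRemovable ℓ J μ c

/-- One step: delete one `J`-removable box. -/
def JRemoveStep (ℓ : ℕ) (J : Set (ZMod ℓ)) (μ ν : YoungDiagram) : Prop :=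
  ∃ c, IsJRemovable ℓ J μ c ∧ ν.cells = μ.cells.erase c

/-- `ν` is a `J`-core of `λ`, obtained by successively deleting `J`-removable boxes. -/
def JReaches (ℓ : ℕ) (J : Set (ZMod ℓ)) (lam ν : YoungDiagram) : Prop :=
  Relation.ReflTransGen (JRemoveStep ℓ J) lam ν ∧ IsJCore ℓ J ν

section Basics
open Finset

variable {ℓ : ℕ}

/-- The "bead" of row `r`: `rowLen r - 1 - r`.  Beads form the beta-set of the partition. -/
def bd (μ : YoungDiagram) (r : ℕ) : ℤ := (μ.rowLen r : ℤ) - 1 - r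

lemma bd_strictAnti (μ : YoungDiagram) : StrictAnti (bd μ) := by
  apply strictAnti_nat_of_succ_lt
  intro r
  have h := μ.rowLen_anti r (r + 1) (by omega)
  unfold bd; push_cast; omega

lemma bd_injective (μ : YoungDiagram) : Function.Injective (bd μ) :=
  (bd_strictAnti μ).injective

lemma bd_anti_le {μ : YoungDiagram} {r q : ℕ} (h : r ≤ q) : bd μ q ≤ bd μ r :=
  (bd_strictAnti μ).antitone h

/-- Rows past a zero row have bead `-1 - r`. -/
lemma bd_of_rowLen_zero {μ : YoungDiagram} {r : ℕ} (h : μ.rowLen r = 0) :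
    bd μ r = -1 - r := by unfold bd; rw [h]; push_cast; ring

lemma rowLen_zero_mono {μ : YoungDiagram} {n q : ℕ} (h : μ.rowLen n = 0) (hq : n ≤ q) :
    μ.rowLen q = 0 := le_antisymm (h ▸ μ.rowLen_anti n q hq) (Nat.zero_le _)

lemma exists_rowLen_zero (μ : YoungDiagram) : ∃ n, μ.rowLen n = 0 := by
  refine ⟨μ.colLen 0, ?_⟩
  by_contra h
  have : (μ.colLen 0, 0) ∈ μ := by
    rw [YoungDiagram.mem_iff_lt_rowLen]; omega
  rw [YoungDiagram.mem_iff_lt_colLen] at this; omega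

/-- Any sufficiently negative integer is a bead. -/
lemma mem_range_bd_of_le {μ : YoungDiagram} {n : ℕ} (h : μ.rowLen n = 0) {x : ℤ}
    (hx : x ≤ -1 - n) : x ∈ Set.range (bd μ) := by
  have hr : ∃ r : ℕ, x = -1 - (r : ℤ) ∧ n ≤ r := by
    refine ⟨(-1 - x).toNat, ?_, ?_⟩ <;> omega
  obtain ⟨r, rfl, hnr⟩ := hr
  exact ⟨r, bd_of_rowLen_zero (rowLen_zero_mono h hnr)⟩

lemma rowLen_mono_of_subset {μ ν : YoungDiagram} (h : ν.cells ⊆ μ.cells) (q : ℕ) :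
    ν.rowLen q ≤ μ.rowLen q := by
  by_contra hc
  have : (q, μ.rowLen q) ∈ ν := by rw [YoungDiagram.mem_iff_lt_rowLen]; omega
  have := h this
  rw [YoungDiagram.mem_cells, YoungDiagram.mem_iff_lt_rowLen] at this; omega

lemma rowLen_unique {ν : YoungDiagram} {q m : ℕ} (h : ∀ t, (q, t) ∈ ν ↔ t < m) :
    ν.rowLen q = m := by
  have h1 := h m
  have h2 := h (ν.rowLen q)
  rw [YoungDiagram.mem_iff_lt_rowLen] at h1 h2
  omega

/-- Characterization of removable boxes. -/
lemma isRemovable_iff {μ : YoungDiagram} {r s : ℕ} :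
    IsRemovable μ (r, s) ↔ s + 1 = μ.rowLen r ∧ μ.rowLen (r + 1) ≤ s := by
  constructor
  · rintro ⟨hmem, ν, hcells⟩
    rw [YoungDiagram.mem_cells, YoungDiagram.mem_iff_lt_rowLen] at hmem
    have hright : (r, s + 1) ∉ μ := by
      intro hc
      have h1 : (r, s + 1) ∈ ν.cells := by
        rw [hcells, Finset.mem_erase]
        exact ⟨by simp, hc⟩
      have h2 : (r, s) ∈ ν.cells := by
        have := ν.isLowerSet (by simp [Prod.mk_le_mk] : (r, s) ≤ (r, s + 1)) h1
        exact this
      rw [hcells, Finset.mem_erase] at h2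
      exact h2.1 rfl
    have hdown : (r + 1, s) ∉ μ := by
      intro hc
      have h1 : (r + 1, s) ∈ ν.cells := by
        rw [hcells, Finset.mem_erase]
        exact ⟨by simp, hc⟩
      have h2 : (r, s) ∈ ν.cells := by
        have := ν.isLowerSet (by simp [Prod.mk_le_mk] : (r, s) ≤ (r + 1, s)) h1
        exact this
      rw [hcells, Finset.mem_erase] at h2
      exact h2.1 rfl
    rw [YoungDiagram.mem_iff_lt_rowLen] at hright hdown
    constructor <;> omega
  · rintro ⟨h1, h2⟩
    have hmem : (r, s) ∈ μ := by rw [YoungDiagram.mem_iff_lt_rowLen]; omega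
    refine ⟨hmem, ⟨μ.cells.erase (r, s), ?_⟩, rfl⟩
    rintro ⟨a, b⟩ ⟨c, d⟩ hle hcd
    simp only [Finset.coe_erase, Set.mem_diff, Finset.mem_coe, Set.mem_singleton_iff] at hcd ⊢
    obtain ⟨hcd1, hcd2⟩ := hcd
    rw [Prod.mk_le_mk] at hle
    obtain ⟨hle1, hle2⟩ := hle
    have hab : (a, b) ∈ μ := hcd1
    rw [YoungDiagram.mem_iff_lt_rowLen] at hab
    refine ⟨μ.isLowerSet (Prod.mk_le_mk.mpr ⟨hle1, hle2⟩) hcd1, ?_⟩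
    intro heq
    rw [Prod.mk.injEq] at heq
    obtain ⟨rfl, rfl⟩ := heq
    rcases Nat.lt_or_ge c a with hac | hac
    · have : (c + 1, d) ∈ μ :=
        μ.isLowerSet (show ((c + 1 : ℕ), d) ≤ (a, b) from Prod.mk_le_mk.mpr ⟨by omega, hle2⟩) hcd1
      rw [YoungDiagram.mem_iff_lt_rowLen] at this; omega
    · rcases Nat.lt_or_ge d b with hbd | hbd
      · have : (c, d + 1) ∈ μ :=
          μ.isLowerSet (show ((c : ℕ), d + 1) ≤ (a, b) from Prod.mk_le_mk.mpr ⟨hle1, by omega⟩) hcd1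
        rw [YoungDiagram.mem_iff_lt_rowLen] at this; omega
      · exact hcd2 (by rw [Prod.mk.injEq]; omega)

end Basics
section Beads
open Finset

variable {ℓ : ℕ}

lemma rowLen_of_erase {μ ν : YoungDiagram} {r s : ℕ} (hs : s + 1 = μ.rowLen r)
    (hcells : ν.cells = μ.cells.erase (r, s)) (q : ℕ) :
    ν.rowLen q = if q = r then s else μ.rowLen q := by
  have hmem : ∀ t, (q, t) ∈ ν ↔ ((q, t) ∈ μ ∧ (q, t) ≠ (r, s)) := by
    intro t
    rw [← YoungDiagram.mem_cells, hcells, Finset.mem_erase, and_comm]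
    simp [YoungDiagram.mem_cells]
  split_ifs with hq
  · subst hq
    apply rowLen_unique
    intro t
    rw [hmem t, YoungDiagram.mem_iff_lt_rowLen]
    constructor
    · rintro ⟨h1, h2⟩
      rcases Nat.lt_or_ge t s with h | h
      · exact h
      · exfalso; exact h2 (by rw [Prod.mk.injEq]; omega)
    · intro h; exact ⟨by omega, by simp only [ne_eq, Prod.mk.injEq]; omega⟩
  · apply rowLen_unique
    intro t
    rw [hmem t, YoungDiagram.mem_iff_lt_rowLen]
    constructor
    · rintro ⟨h1, _⟩; exact h1
    · intro h; exact ⟨h, by simp only [ne_eq, Prod.mk.injEq]; omega⟩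

lemma bd_of_erase {μ ν : YoungDiagram} {r s : ℕ} (hs : s + 1 = μ.rowLen r)
    (hcells : ν.cells = μ.cells.erase (r, s)) (q : ℕ) :
    bd ν q = if q = r then bd μ r - 1 else bd μ q := by
  have h := rowLen_of_erase hs hcells q
  split_ifs with hq
  · subst hq; unfold bd; rw [h, if_pos rfl, ← hs]; push_cast; ring
  · unfold bd; rw [h, if_neg hq]

lemma range_bd_of_erase {μ ν : YoungDiagram} {r s : ℕ} (hs : s + 1 = μ.rowLen r)
    (hcells : ν.cells = μ.cells.erase (r, s)) :
    Set.range (bd ν) = (Set.range (bd μ) \ {bd μ r}) ∪ {bd μ r - 1} := by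
  ext x
  simp only [Set.mem_range, Set.mem_union, Set.mem_diff, Set.mem_singleton_iff]
  constructor
  · rintro ⟨q, rfl⟩
    rw [bd_of_erase hs hcells q]
    split_ifs with hq
    · right; rfl
    · left; exact ⟨⟨q, rfl⟩, fun hc => hq (bd_injective μ hc)⟩
  · rintro (⟨⟨q, rfl⟩, hne⟩ | rfl)
    · refine ⟨q, ?_⟩
      rw [bd_of_erase hs hcells q, if_neg (fun hc => hne (by rw [hc]))]
    · exact ⟨r, by rw [bd_of_erase hs hcells r, if_pos rfl]⟩

/-- A gap just below a bead. -/
lemma bd_gap_of_lt {μ : YoungDiagram} {r : ℕ} (h : μ.rowLen (r + 1) < μ.rowLen r) :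
    bd μ r - 1 ∉ Set.range (bd μ) := by
  rintro ⟨q, hq⟩
  rcases Nat.lt_or_ge q (r + 1) with h1 | h1
  · have := bd_anti_le (μ := μ) (show q ≤ r by omega)
    omega
  · have h2 := bd_anti_le (μ := μ) h1
    have : bd μ (r + 1) ≤ bd μ r - 2 := by unfold bd; push_cast; omega
    omega

lemma lt_of_bd_gap {μ : YoungDiagram} {r : ℕ} (h : bd μ r - 1 ∉ Set.range (bd μ)) :
    μ.rowLen (r + 1) < μ.rowLen r := by
  by_contra hc
  have heq : μ.rowLen (r + 1) = μ.rowLen r := le_antisymm (μ.rowLen_anti r (r+1) (by omega)) (by omega)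
  exact h ⟨r + 1, by unfold bd; rw [heq]; push_cast; ring⟩

/-- From a bead with a gap below it, produce a removal step. -/
lemma exists_remove_of_gap {μ : YoungDiagram} {b : ℤ} (hb : b ∈ Set.range (bd μ))
    (hgap : b - 1 ∉ Set.range (bd μ)) :
    ∃ (ν : YoungDiagram) (c : ℕ × ℕ), IsRemovable μ c ∧ ν.cells = μ.cells.erase c ∧
      rsd c = b ∧ (c.2 : ℤ) + 1 = (μ.rowLen c.1 : ℤ) ∧
      Set.range (bd ν) = (Set.range (bd μ) \ {b}) ∪ {b - 1} := by
  obtain ⟨r, rfl⟩ := hb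
  have hlt : μ.rowLen (r + 1) < μ.rowLen r := lt_of_bd_gap hgap
  have hpos : 1 ≤ μ.rowLen r := by omega
  set s : ℕ := μ.rowLen r - 1 with hs_def
  have hs : s + 1 = μ.rowLen r := by omega
  have hrem : IsRemovable μ (r, s) := isRemovable_iff.mpr ⟨hs, by omega⟩
  obtain ⟨-, ν, hcells⟩ := hrem
  refine ⟨ν, (r, s), isRemovable_iff.mpr ⟨hs, by omega⟩, hcells, ?_, ?_, ?_⟩
  · unfold rsd bd; simp only; omega
  · simp only; omega
  · exact range_bd_of_erase hs hcells
end Beads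
section Cnt
open Finset

variable {ℓ : ℕ}

/-- Number of beads among the first `n` whose residue class is `i`. -/
def cnt (ℓ n : ℕ) (μ : YoungDiagram) (i : ZMod ℓ) : ℕ :=
  ((Finset.range n).filter (fun r => ((bd μ r : ZMod ℓ)) = i)).card

lemma cnt_step {ℓ n : ℕ} {μ ν : YoungDiagram} {r s : ℕ} (hs : s + 1 = μ.rowLen r)
    (hcells : ν.cells = μ.cells.erase (r, s)) (hrn : r < n) (i : ZMod ℓ) :
    cnt ℓ n ν i + (if ((bd μ r : ZMod ℓ)) = i then 1 else 0)
      = cnt ℓ n μ i + (if ((bd μ r : ZMod ℓ)) = i + 1 then 1 else 0) := by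
  classical
  have hb : ∀ q, bd ν q = if q = r then bd μ r - 1 else bd μ q := bd_of_erase hs hcells
  unfold cnt
  rw [Finset.card_filter, Finset.card_filter,
      ← Finset.sum_erase_add _ _ (Finset.mem_range.mpr hrn),
      ← Finset.sum_erase_add _ _ (Finset.mem_range.mpr hrn)]
  have hsum : (∑ q ∈ (Finset.range n).erase r, (if ((bd ν q : ZMod ℓ)) = i then 1 else 0))
      = ∑ q ∈ (Finset.range n).erase r, (if ((bd μ q : ZMod ℓ)) = i then 1 else 0) := by
    apply Finset.sum_congr rfl
    intro q hq
    rw [hb q, if_neg (Finset.mem_erase.mp hq).1]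
  rw [hsum, hb r, if_pos rfl]
  have hiff : (((bd μ r - 1 : ℤ) : ZMod ℓ) = i) ↔ ((bd μ r : ZMod ℓ) = i + 1) := by
    rw [Int.cast_sub, Int.cast_one, sub_eq_iff_eq_add]
  rcases eq_or_ne ((bd μ r : ZMod ℓ)) (i + 1) with hcase | hcase
  · rw [if_pos (hiff.mpr hcase), if_pos hcase]; ring
  · rw [if_neg (fun hh => hcase (hiff.mp hh)), if_neg hcase]; ring
end Cnt
section Chain
open Finset

lemma removeStep_facts {μ ν : YoungDiagram} (h : RemoveStep μ ν) :
    ∃ (r s : ℕ), s + 1 = μ.rowLen r ∧ μ.rowLen (r + 1) ≤ s ∧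
      ν.cells = μ.cells.erase (r, s) ∧ rsd (r, s) = bd μ r := by
  obtain ⟨⟨r, s⟩, hrem, hcells⟩ := h
  obtain ⟨h1, h2⟩ := isRemovable_iff.mp hrem
  refine ⟨r, s, h1, h2, hcells, ?_⟩
  unfold rsd bd; simp only; omega

lemma obtainable_facts {μ ν : YoungDiagram} (h : Obtainable μ ν) :
    ν.cells ⊆ μ.cells ∧
    ∀ (ℓ n : ℕ) (i : ZMod ℓ), μ.rowLen n = 0 →
      cnt ℓ n ν i + ((μ.cells \ ν.cells).filter (fun c => res ℓ c = i)).card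
        = cnt ℓ n μ i + ((μ.cells \ ν.cells).filter (fun c => res ℓ c = i + 1)).card := by
  classical
  induction h with
  | refl => exact ⟨subset_rfl, by intro ℓ n i _; simp⟩
  | @tail lam ν' hpre hstep ih =>
    obtain ⟨r, s, hs, hlt, hcells, hrsd⟩ := removeStep_facts hstep
    have hsub : ν'.cells ⊆ lam.cells := by
      rw [hcells]; exact Finset.erase_subset _ _
    have hcs : (r, s) ∈ lam.cells := by
      rw [YoungDiagram.mem_cells, YoungDiagram.mem_iff_lt_rowLen]; omega
    refine ⟨hsub.trans ih.1, fun ℓ n i hn => ?_⟩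
    have hlamn : lam.rowLen n = 0 :=
      le_antisymm (hn ▸ rowLen_mono_of_subset ih.1 n) (Nat.zero_le _)
    have hrn : r < n := by
      by_contra hc
      have := lam.rowLen_anti n r (by omega)
      omega
    have hstepc := cnt_step hs hcells hrn i
    have hih := ih.2 ℓ n i hn
    -- diff decomposition
    have hdiff : μ.cells \ ν'.cells = insert (r, s) (μ.cells \ lam.cells) := by
      ext x
      simp only [Finset.mem_sdiff, Finset.mem_insert, hcells, Finset.mem_erase]
      constructor
      · rintro ⟨hxμ, hx⟩
        by_cases hxl : x ∈ lam.cells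
        · left
          by_contra hne
          exact hx ⟨hne, hxl⟩
        · right; exact ⟨hxμ, hxl⟩
      · rintro (rfl | ⟨hxμ, hxl⟩)
        · exact ⟨ih.1 hcs, fun hc => hc.1 rfl⟩
        · exact ⟨hxμ, fun hc => hxl hc.2⟩
    have hnotmem : (r, s) ∉ μ.cells \ lam.cells := by
      simp only [Finset.mem_sdiff, not_and, not_not]
      intro _; exact hcs
    have hres : res ℓ (r, s) = ((bd lam r : ZMod ℓ)) := by
      unfold res; rw [hrsd]
    have hfc : ∀ j : ZMod ℓ,
        ((μ.cells \ ν'.cells).filter (fun c => res ℓ c = j)).card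
          = ((μ.cells \ lam.cells).filter (fun c => res ℓ c = j)).card
            + (if ((bd lam r : ZMod ℓ)) = j then 1 else 0) := by
      intro j
      rw [hdiff, Finset.filter_insert, hres]
      split_ifs with hj
      · rw [Finset.card_insert_of_notMem (fun hc => hnotmem (Finset.mem_filter.mp hc).1)]
      · rw [add_zero]
    rw [hfc i, hfc (i + 1)]
    omega

lemma coreStep_facts {ℓ : ℕ} [NeZero ℓ] {μ ν : YoungDiagram} (h : CoreStep ℓ μ ν) :
    ν.cells ⊆ μ.cells ∧ ∀ (n : ℕ) (i : ZMod ℓ), μ.rowLen n = 0 → cnt ℓ n ν i = cnt ℓ n μ i := by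
  classical
  obtain ⟨hob, hcard, hinj⟩ := h
  have hfacts := obtainable_facts hob
  refine ⟨hfacts.1, fun n i hn => ?_⟩
  have hone : ∀ j : ZMod ℓ, ((μ.cells \ ν.cells).filter (fun c => res ℓ c = j)).card = 1 := by
    intro j
    have himg : (μ.cells \ ν.cells).image (res ℓ) = Finset.univ := by
      apply Finset.eq_univ_of_card
      rw [Finset.card_image_of_injOn hinj, hcard, ZMod.card ℓ]
    have hjmem : j ∈ (μ.cells \ ν.cells).image (res ℓ) := himg ▸ Finset.mem_univ j
    obtain ⟨c, hc, hcj⟩ := Finset.mem_image.mp hjmem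
    rw [Finset.card_eq_one]
    refine ⟨c, ?_⟩
    ext x
    simp only [Finset.mem_filter, Finset.mem_singleton]
    constructor
    · rintro ⟨hx, hxj⟩
      exact hinj (Finset.mem_coe.mpr hx) (Finset.mem_coe.mpr hc) (by rw [hxj, hcj])
    · rintro rfl; exact ⟨hc, hcj⟩
  have h1 := hfacts.2 ℓ n i hn
  rw [hone i, hone (i + 1)] at h1
  omega

lemma reaches_facts {ℓ : ℕ} [NeZero ℓ] {μ ν : YoungDiagram}
    (h : Relation.ReflTransGen (CoreStep ℓ) μ ν) :
    ν.cells ⊆ μ.cells ∧ ∀ (n : ℕ) (i : ZMod ℓ), μ.rowLen n = 0 →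
      cnt ℓ n ν i = cnt ℓ n μ i := by
  induction h with
  | refl => exact ⟨subset_rfl, fun _ _ _ => rfl⟩
  | @tail lam ν' hpre hstep ih =>
    have hf := coreStep_facts hstep
    refine ⟨hf.1.trans ih.1, fun n i hn => ?_⟩
    have hmid : lam.rowLen n = 0 :=
      le_antisymm (hn ▸ rowLen_mono_of_subset ih.1 n) (Nat.zero_le _)
    rw [hf.2 n i hmid, ih.2 n i hn]
end Chain
section Rimhook
open Finset

lemma diff_insert_of_erase_left {lam lam1 lam' : YoungDiagram} {c : ℕ × ℕ}
    (hc : c ∈ lam.cells) (hcells : lam1.cells = lam.cells.erase c)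
    (hsub : lam'.cells ⊆ lam1.cells) :
    lam.cells \ lam'.cells = insert c (lam1.cells \ lam'.cells) := by
  have hc1 : c ∉ lam1.cells := by rw [hcells]; exact Finset.notMem_erase _ _
  ext x
  simp only [Finset.mem_sdiff, Finset.mem_insert]
  constructor
  · rintro ⟨hxl, hxn⟩
    by_cases hxc : x = c
    · exact Or.inl hxc
    · right
      refine ⟨?_, hxn⟩
      rw [hcells, Finset.mem_erase]; exact ⟨hxc, hxl⟩
  · rintro (rfl | ⟨hx1, hxn⟩)
    · exact ⟨hc, fun hh => hc1 (hsub hh)⟩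
    · refine ⟨?_, hxn⟩
      rw [hcells] at hx1
      exact Finset.erase_subset _ _ hx1

lemma diff_insert_of_erase_right {lam lam1 ν : YoungDiagram} {c : ℕ × ℕ}
    (hsub : lam1.cells ⊆ lam.cells) (hc : c ∈ lam1.cells)
    (hcells : ν.cells = lam1.cells.erase c) :
    lam.cells \ ν.cells = insert c (lam.cells \ lam1.cells) := by
  ext x
  simp only [Finset.mem_sdiff, Finset.mem_insert, hcells, Finset.mem_erase]
  constructor
  · rintro ⟨hxl, hxn⟩
    by_cases hxc : x = c
    · exact Or.inl hxc
    · right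
      exact ⟨hxl, fun hx1 => hxn ⟨hxc, hx1⟩⟩
  · rintro (rfl | ⟨hxl, hx1⟩)
    · exact ⟨hsub hc, fun hh => hh.1 rfl⟩
    · exact ⟨hxl, fun hh => hx1 hh.2⟩

lemma set_shuffle1 {R : Set ℤ} {b u : ℤ} (hbR : b - 1 ∈ R) (hub : u ≠ b) (hub1 : u ≠ b - 1) :
    ((R \ {b - 1} ∪ {u}) \ {b}) ∪ {b - 1} = (R \ {b}) ∪ {u} := by
  have hbb : b - 1 ≠ b := by omega
  ext x
  simp only [Set.mem_union, Set.mem_diff, Set.mem_singleton_iff]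
  constructor
  · rintro (⟨(⟨hxR, hx1⟩ | rfl), hxb⟩ | rfl)
    · exact Or.inl ⟨hxR, hxb⟩
    · exact Or.inr rfl
    · exact Or.inl ⟨hbR, hbb⟩
  · rintro (⟨hxR, hxb⟩ | rfl)
    · by_cases hx1 : x = b - 1
      · exact Or.inr hx1
      · exact Or.inl ⟨Or.inl ⟨hxR, hx1⟩, hxb⟩
    · exact Or.inl ⟨Or.inr rfl, hub⟩

lemma set_shuffle2 {R : Set ℤ} {b u : ℤ} (hb1 : b - 1 ∉ R) :
    ((R \ {b} ∪ {b - 1}) \ {b - 1}) ∪ {u} = (R \ {b}) ∪ {u} := by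
  ext x
  simp only [Set.mem_union, Set.mem_diff, Set.mem_singleton_iff]
  constructor
  · rintro (⟨(⟨hxR, hxb⟩ | rfl), hx1⟩ | rfl)
    · exact Or.inl ⟨hxR, hxb⟩
    · exact absurd rfl hx1
    · exact Or.inr rfl
  · rintro (⟨hxR, hxb⟩ | rfl)
    · refine Or.inl ⟨Or.inl ⟨hxR, hxb⟩, ?_⟩
      rintro rfl; exact hb1 hxR
    · exact Or.inr rfl

lemma rimhook_exists : ∀ (k : ℕ) (lam : YoungDiagram) (b : ℤ),
    b ∈ Set.range (bd lam) → b - ((k : ℤ) + 1) ∉ Set.range (bd lam) →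
    ∃ lam' : YoungDiagram, Obtainable lam lam' ∧
      Set.range (bd lam') = (Set.range (bd lam) \ {b}) ∪ {b - ((k : ℤ) + 1)} ∧
      (lam.cells \ lam'.cells).card = k + 1 ∧
      (∀ c ∈ lam.cells \ lam'.cells, rsd c ∈ Finset.Ioc (b - ((k : ℤ) + 1)) b) ∧
      Set.InjOn rsd ↑(lam.cells \ lam'.cells) := by
  intro k
  induction k with
  | zero =>
    intro lam b hb hgap
    push_cast at hgap
    obtain ⟨ν, c, hrem, hcells, hrsd, -, hrange⟩ := exists_remove_of_gap hb hgap
    have hdiff : lam.cells \ ν.cells = {c} := by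
      have := diff_insert_of_erase_right (subset_rfl) hrem.1 hcells
      simpa using this
    refine ⟨ν, Relation.ReflTransGen.single ⟨c, hrem, hcells⟩, ?_, ?_, ?_, ?_⟩
    · push_cast; exact hrange
    · rw [hdiff]; simp
    · intro c' hc'
      rw [hdiff, Finset.mem_singleton] at hc'
      subst hc'
      rw [hrsd, Finset.mem_Ioc]
      push_cast
      omega
    · rw [hdiff]
      intro x hx y hy _
      simp only [Finset.coe_singleton, Set.mem_singleton_iff] at hx hy
      rw [hx, hy]
  | succ k ih =>
    intro lam b hb hgap
    have hcast : b - ((↑(k + 1) : ℤ) + 1) = b - ((k : ℤ) + 2) := by push_cast; ring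
    rw [hcast] at hgap ⊢
    by_cases hb1 : b - 1 ∈ Set.range (bd lam)
    · -- remove the lower hook first, then the box at `b`
      have hg1 : (b - 1) - ((k : ℤ) + 1) ∉ Set.range (bd lam) := by
        convert hgap using 2; ring
      obtain ⟨lam1, hob1, hrange1, hcard1, hioc1, hinj1⟩ := ih lam (b - 1) hb1 hg1
      have heq1 : b - 1 - ((k : ℤ) + 1) = b - ((k : ℤ) + 2) := by ring
      rw [heq1] at hrange1 hioc1
      have hsub1 : lam1.cells ⊆ lam.cells := (obtainable_facts hob1).1
      have hbmem : b ∈ Set.range (bd lam1) := by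
        rw [hrange1]
        left
        refine ⟨hb, ?_⟩
        simp only [Set.mem_singleton_iff]
        omega
      have hbgap : b - 1 ∉ Set.range (bd lam1) := by
        rw [hrange1]
        rintro (⟨-, hc⟩ | hc)
        · exact hc rfl
        · simp only [Set.mem_singleton_iff] at hc; omega
      obtain ⟨ν, c1, hrem, hcells, hrsd, -, hrange'⟩ := exists_remove_of_gap hbmem hbgap
      have hdiff : lam.cells \ ν.cells = insert c1 (lam.cells \ lam1.cells) :=
        diff_insert_of_erase_right hsub1 hrem.1 hcells
      have hc1notin : c1 ∉ lam.cells \ lam1.cells := by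
        simp only [Finset.mem_sdiff, not_and, not_not]
        intro _; exact hrem.1
      refine ⟨ν, hob1.tail ⟨c1, hrem, hcells⟩, ?_, ?_, ?_, ?_⟩
      · rw [hrange', hrange1]
        exact set_shuffle1 hb1 (by omega) (by omega)
      · rw [hdiff, Finset.card_insert_of_notMem hc1notin, hcard1]
      · intro c hc
        rw [hdiff, Finset.mem_insert] at hc
        rcases hc with rfl | hc
        · rw [hrsd, Finset.mem_Ioc]; omega
        · have := hioc1 c hc
          rw [Finset.mem_Ioc] at this ⊢
          omega
      · rw [hdiff]
        intro x hx y hy hxy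
        simp only [Finset.coe_insert, Set.mem_insert_iff, Finset.mem_coe] at hx hy
        rcases hx with rfl | hx <;> rcases hy with rfl | hy
        · rfl
        · exfalso
          have := hioc1 y hy
          rw [Finset.mem_Ioc] at this
          rw [hrsd] at hxy
          omega
        · exfalso
          have := hioc1 x hx
          rw [Finset.mem_Ioc] at this
          rw [hrsd] at hxy
          omega
        · exact hinj1 (Finset.mem_coe.mpr hx) (Finset.mem_coe.mpr hy) hxy
    · -- remove the box at `b` first, then the lower hook
      obtain ⟨lam1, c0, hrem, hcells, hrsd, -, hrange0⟩ := exists_remove_of_gap hb hb1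
      have hb1mem : b - 1 ∈ Set.range (bd lam1) := by rw [hrange0]; right; rfl
      have hg1 : (b - 1) - ((k : ℤ) + 1) ∉ Set.range (bd lam1) := by
        rw [hrange0]
        rintro (⟨hc, -⟩ | hc)
        · exact hgap (by convert hc using 1; ring)
        · simp only [Set.mem_singleton_iff] at hc; omega
      obtain ⟨lam', hob1, hrange1, hcard1, hioc1, hinj1⟩ := ih lam1 (b - 1) hb1mem hg1
      have heq1 : b - 1 - ((k : ℤ) + 1) = b - ((k : ℤ) + 2) := by ring
      rw [heq1] at hrange1 hioc1
      have hsub' : lam'.cells ⊆ lam1.cells := (obtainable_facts hob1).1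
      have hdiff : lam.cells \ lam'.cells = insert c0 (lam1.cells \ lam'.cells) :=
        diff_insert_of_erase_left hrem.1 hcells hsub'
      have hc0notin : c0 ∉ lam1.cells \ lam'.cells := by
        simp only [Finset.mem_sdiff, not_and, not_not]
        intro hc; exfalso
        rw [hcells] at hc
        exact Finset.notMem_erase _ _ hc
      refine ⟨lam', Relation.ReflTransGen.head ⟨c0, hrem, hcells⟩ hob1, ?_, ?_, ?_, ?_⟩
      · rw [hrange1, hrange0]
        exact set_shuffle2 hb1
      · rw [hdiff, Finset.card_insert_of_notMem hc0notin, hcard1]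
      · intro c hc
        rw [hdiff, Finset.mem_insert] at hc
        rcases hc with rfl | hc
        · rw [hrsd, Finset.mem_Ioc]; omega
        · have := hioc1 c hc
          rw [Finset.mem_Ioc] at this ⊢
          omega
      · rw [hdiff]
        intro x hx y hy hxy
        simp only [Finset.coe_insert, Set.mem_insert_iff, Finset.mem_coe] at hx hy
        rcases hx with rfl | hx <;> rcases hy with rfl | hy
        · rfl
        · exfalso
          have := hioc1 y hy
          rw [Finset.mem_Ioc] at this
          rw [hrsd] at hxy
          omega
        · exfalso
          have := hioc1 x hx
          rw [Finset.mem_Ioc] at this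
          rw [hrsd] at hxy
          omega
        · exact hinj1 (Finset.mem_coe.mpr hx) (Finset.mem_coe.mpr hy) hxy
end Rimhook
section JCore
open Finset

lemma res_eq_bd {ℓ r s : ℕ} {μ : YoungDiagram} (hs : s + 1 = μ.rowLen r) :
    res ℓ (r, s) = ((bd μ r : ZMod ℓ)) := by
  unfold res rsd bd
  simp only
  congr 1
  omega

lemma isJCore_iff {ℓ : ℕ} {J : Set (ZMod ℓ)} {μ : YoungDiagram} :
    IsJCore ℓ J μ ↔ ∀ r, μ.rowLen (r + 1) < μ.rowLen r → ((bd μ r : ZMod ℓ)) ∉ J := by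
  constructor
  · intro h r hlt hJ
    have hs : (μ.rowLen r - 1) + 1 = μ.rowLen r := by omega
    apply h (r, μ.rowLen r - 1)
    exact ⟨isRemovable_iff.mpr ⟨hs, by omega⟩, by rw [res_eq_bd hs]; exact hJ⟩
  · rintro h ⟨r, s⟩ ⟨hrem, hres⟩
    obtain ⟨h1, h2⟩ := isRemovable_iff.mp hrem
    apply h r (by omega)
    rw [← res_eq_bd h1]
    exact hres

lemma jcore_bead_step {ℓ : ℕ} {J : Set (ZMod ℓ)} {μ : YoungDiagram} (h : IsJCore ℓ J μ)
    (r : ℕ) (hJ : ((bd μ r : ZMod ℓ)) ∈ J) : bd μ (r + 1) = bd μ r - 1 := by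
  have hiff := isJCore_iff.mp h r
  have heq : μ.rowLen (r + 1) = μ.rowLen r := by
    by_contra hc
    have h1 := μ.rowLen_anti r (r + 1) (by omega)
    exact hiff (by omega) hJ
  unfold bd
  rw [heq]
  push_cast
  ring

lemma cnt_succ {ℓ n : ℕ} {μ : YoungDiagram} (i : ZMod ℓ) :
    cnt ℓ (n + 1) μ i = cnt ℓ n μ i + (if ((bd μ n : ZMod ℓ)) = i then 1 else 0) := by
  unfold cnt
  rw [Finset.range_add_one, Finset.filter_insert]
  split_ifs with h
  · rw [Finset.card_insert_of_notMem
      (fun hc => absurd (Finset.mem_range.mp (Finset.mem_filter.mp hc).1) (lt_irrefl n))]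
  · rw [add_zero]

/-- Key inequality from `μ` being a `J`-core. -/
lemma key_ineq {ℓ n : ℕ} {J : Set (ZMod ℓ)} {μ : YoungDiagram} (h : IsJCore ℓ J μ)
    {j : ZMod ℓ} (hj : j ∈ J) :
    cnt ℓ n μ j ≤ cnt ℓ n μ (j - 1) + (if ((bd μ n : ZMod ℓ)) = j - 1 then 1 else 0) := by
  rw [← cnt_succ]
  unfold cnt
  apply Finset.card_le_card_of_injOn (fun r => r + 1)
  · intro r hr
    rw [Finset.mem_coe, Finset.mem_filter, Finset.mem_range] at hr ⊢
    beta_reduce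
    obtain ⟨hr1, hr2⟩ := hr
    refine ⟨by omega, ?_⟩
    rw [jcore_bead_step h r (by rw [hr2]; exact hj)]
    push_cast
    rw [hr2]
  · intro a _ b _ hab
    simpa using hab

/-- `IsCore` implies the bead set is downward closed on each runner. -/
lemma dc_of_isCore {ℓ : ℕ} [NeZero ℓ] {ν : YoungDiagram} (h : IsCore ℓ ν) :
    ∀ b ∈ Set.range (bd ν), b - (ℓ : ℤ) ∈ Set.range (bd ν) := by
  intro b hb
  by_contra hgap
  obtain ⟨k, hk⟩ : ∃ k : ℕ, ℓ = k + 1 := ⟨ℓ - 1, by have := NeZero.pos ℓ; omega⟩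
  have hgap' : b - ((k : ℤ) + 1) ∉ Set.range (bd ν) := by
    intro hc; apply hgap; convert hc using 2; rw [hk]; push_cast; ring
  obtain ⟨lam', hob, _, hcard, hioc, hinj⟩ := rimhook_exists k ν b hb hgap'
  apply h
  refine ⟨lam', hob, by rw [hcard, hk], ?_⟩
  intro x hx y hy hxy
  apply hinj hx hy
  have hdx := hioc x (Finset.mem_coe.mp hx)
  have hdy := hioc y (Finset.mem_coe.mp hy)
  rw [Finset.mem_Ioc] at hdx hdy
  unfold res at hxy
  have hdvd : (ℓ : ℤ) ∣ rsd y - rsd x := by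
    rw [← Int.modEq_iff_dvd]
    exact (ZMod.intCast_eq_intCast_iff _ _ _).mp hxy
  obtain ⟨m, hm⟩ := hdvd
  have hℓk : (ℓ : ℤ) = (k : ℤ) + 1 := by rw [hk]; push_cast; ring
  rcases lt_trichotomy m 0 with hm0 | hm0 | hm0
  · exfalso
    have h1 : (ℓ : ℤ) * m ≤ -ℓ := by
      have : (ℓ : ℤ) * m ≤ ℓ * (-1) := by
        apply mul_le_mul_of_nonneg_left (by omega) (by positivity)
      omega
    omega
  · rw [hm0, mul_zero] at hm; omega
  · exfalso
    have h1 : (ℓ : ℤ) ≤ ℓ * m := by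
      have : (ℓ : ℤ) * 1 ≤ ℓ * m := by
        apply mul_le_mul_of_nonneg_left (by omega) (by positivity)
      omega
    omega

open Classical in
noncomputable def ridx (ν : YoungDiagram) (x : ℤ) : ℕ :=
  if h : x ∈ Set.range (bd ν) then h.choose else 0

lemma bd_ridx {ν : YoungDiagram} {x : ℤ} (h : x ∈ Set.range (bd ν)) :
    bd ν (ridx ν x) = x := by
  unfold ridx
  rw [dif_pos h]
  exact h.choose_spec

end JCore
section Final
open Finset

/-- Iterated descent along a runner. -/
lemma desc_of_dc {ℓ : ℕ} {ν : YoungDiagram}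
    (hdc : ∀ x ∈ Set.range (bd ν), x - (ℓ : ℤ) ∈ Set.range (bd ν)) :
    ∀ (m : ℕ) (x : ℤ), x ∈ Set.range (bd ν) → x - (m : ℤ) * ℓ ∈ Set.range (bd ν) := by
  intro m
  induction m with
  | zero => intro x hx; simpa using hx
  | succ m ih =>
    intro x hx
    have := hdc _ (ih x hx)
    convert this using 1
    push_cast
    ring

/-- Strict counting inequality for a `J`-violation in a diagram with downward-closed runners. -/
lemma nu_ineq {ℓ : ℕ} [NeZero ℓ] {ν : YoungDiagram} {n r : ℕ}
    (hdc : ∀ x ∈ Set.range (bd ν), x - (ℓ : ℤ) ∈ Set.range (bd ν))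
    (hlt : ν.rowLen (r + 1) < ν.rowLen r) (hn : ν.rowLen n = 0) :
    cnt ℓ n ν (((bd ν r) : ZMod ℓ) - 1) + 1 ≤ cnt ℓ n ν ((bd ν r : ZMod ℓ)) := by
  classical
  have hℓ1 : 1 ≤ ℓ := NeZero.pos ℓ
  set b := bd ν r with hbdef
  have hb : b ∈ Set.range (bd ν) := ⟨r, rfl⟩
  have hgap : b - 1 ∉ Set.range (bd ν) := bd_gap_of_lt hlt
  have hrn : r < n := by
    by_contra hc
    have := ν.rowLen_anti n r (by omega)
    omega
  -- all beads in class (b-1) are ≤ b - 1 - ℓ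
  have hclaim1 : ∀ y ∈ Set.range (bd ν), ((y : ZMod ℓ)) = ((b : ZMod ℓ)) - 1 →
      y ≤ b - 1 - ℓ ∧ y + 1 ∈ Set.range (bd ν) := by
    intro y hy hcast
    have hdvd : (ℓ : ℤ) ∣ (b - 1) - y := by
      rw [← Int.modEq_iff_dvd]
      apply (ZMod.intCast_eq_intCast_iff _ _ _).mp
      push_cast
      rw [hcast]
    obtain ⟨m, hm⟩ := hdvd
    have hm1 : 1 ≤ m := by
      by_contra hc
      apply hgap
      have h0 : 0 ≤ -m := by omega
      have := desc_of_dc hdc (-m).toNat y hy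
      have heq : y - ((-m).toNat : ℤ) * ℓ = b - 1 := by
        rw [Int.toNat_of_nonneg h0]
        linarith [hm]
      rwa [heq] at this
    have hmul : (ℓ : ℤ) ≤ ℓ * m := by
      have : (ℓ : ℤ) * 1 ≤ ℓ * m := mul_le_mul_of_nonneg_left (by omega) (by positivity)
      omega
    constructor
    · omega
    · have hm0 : 0 ≤ m := by omega
      have := desc_of_dc hdc m.toNat b hb
      have heq : b - (m.toNat : ℤ) * ℓ = y + 1 := by
        rw [Int.toNat_of_nonneg hm0]
        linarith [hm]
      rwa [heq] at this
  -- the injection q ↦ index of bead (bd ν q + 1)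
  unfold cnt
  set Sj := (Finset.range n).filter (fun q => ((bd ν q : ZMod ℓ)) = ((b : ZMod ℓ))) with hSj
  set Sj1 := (Finset.range n).filter (fun q => ((bd ν q : ZMod ℓ)) = ((b : ZMod ℓ)) - 1) with hSj1
  have hrmem : r ∈ Sj := by
    rw [hSj, Finset.mem_filter, Finset.mem_range]
    exact ⟨hrn, rfl⟩
  have hcard : Sj1.card ≤ (Sj.erase r).card := by
    apply Finset.card_le_card_of_injOn (fun q => ridx ν (bd ν q + 1))
    · intro q hq
      rw [Finset.mem_coe, Finset.mem_filter, Finset.mem_range] at hq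
      obtain ⟨hq1, hq2⟩ := hq
      have hy := hclaim1 (bd ν q) ⟨q, rfl⟩ hq2
      have hbd : bd ν (ridx ν (bd ν q + 1)) = bd ν q + 1 := bd_ridx hy.2
      have hlt2 : ridx ν (bd ν q + 1) < q := by
        by_contra hc
        have := bd_anti_le (μ := ν) (show q ≤ ridx ν (bd ν q + 1) by omega)
        omega
      rw [Finset.mem_coe, Finset.mem_erase, hSj, Finset.mem_filter, Finset.mem_range]
      beta_reduce
      refine ⟨?_, by omega, ?_⟩
      · intro hc
        rw [hc] at hbd
        have : bd ν q = b - 1 := by omega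
        exact hgap (this ▸ ⟨q, rfl⟩)
      · rw [hbd]
        push_cast
        rw [hq2]
        ring
    · intro a ha b' hb' hab
      have ha2 : ((bd ν a : ZMod ℓ)) = ((b : ZMod ℓ)) - 1 := by
        have h := Finset.mem_coe.mp ha
        rw [hSj1, Finset.mem_filter] at h
        exact h.2
      have hb2 : ((bd ν b' : ZMod ℓ)) = ((b : ZMod ℓ)) - 1 := by
        have h := Finset.mem_coe.mp hb'
        rw [hSj1, Finset.mem_filter] at h
        exact h.2
      have h1 := bd_ridx (hclaim1 (bd ν a) ⟨a, rfl⟩ ha2).2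
      have h2 := bd_ridx (hclaim1 (bd ν b') ⟨b', rfl⟩ hb2).2
      simp only at hab
      rw [hab] at h1
      have : bd ν a = bd ν b' := by omega
      exact bd_injective ν this
  have := Finset.card_erase_of_mem hrmem
  have hpos : 1 ≤ Sj.card := Finset.card_pos.mpr ⟨r, hrmem⟩
  omega

end Final
/-- If `μ` is a `J`-core, then so is its `ℓ`-core `Core_ℓ(μ)`. -/
theorem lcore_of_jcore_is_jcore (ℓ : ℕ) [NeZero ℓ] (J : Set (ZMod ℓ)) (μ ν : YoungDiagram)
    (hμ : IsJCore ℓ J μ) (hν : ReachesCore ℓ μ ν) : IsJCore ℓ J ν := by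
  obtain ⟨hreach, hcore⟩ := hν
  have hfac := reaches_facts hreach
  have hdc := dc_of_isCore hcore
  rw [isJCore_iff]
  intro r hlt hJ
  set b := bd ν r with hbdef
  have hb : b ∈ Set.range (bd ν) := ⟨r, rfl⟩
  have hgap : b - 1 ∉ Set.range (bd ν) := bd_gap_of_lt hlt
  rcases Nat.lt_or_ge ℓ 2 with hl1 | hl2
  · -- the case ℓ = 1
    have hℓ : ℓ = 1 := by have := NeZero.pos ℓ; omega
    have hc : (ℓ : ℤ) = 1 := by omega
    have h1 := hdc b hb
    rw [hc] at h1
    exact hgap h1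
  · -- choose `n` with `rowLen μ n = 0` and `¬ ℓ ∣ b + n`
    obtain ⟨n0, hn0⟩ := exists_rowLen_zero μ
    obtain ⟨n, hn, hnd⟩ : ∃ n : ℕ, μ.rowLen n = 0 ∧ ¬ ((ℓ : ℤ) ∣ b + n) := by
      by_cases hd : (ℓ : ℤ) ∣ b + n0
      · refine ⟨n0 + 1, rowLen_zero_mono hn0 (by omega), ?_⟩
        intro hcon
        obtain ⟨u, hu⟩ := hd
        obtain ⟨v, hv⟩ := hcon
        push_cast at hv
        have h2 : (ℓ : ℤ) ∣ 1 := ⟨v - u, by linear_combination hv - hu⟩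
        have := Int.le_of_dvd one_pos h2
        omega
      · exact ⟨n0, hn0, hd⟩
    have hνn : ν.rowLen n = 0 :=
      le_antisymm (hn ▸ rowLen_mono_of_subset hfac.1 n) (Nat.zero_le _)
    have hkey := key_ineq (n := n) hμ hJ
    have hε : ¬ ((bd μ n : ZMod ℓ)) = ((b : ZMod ℓ)) - 1 := by
      rw [bd_of_rowLen_zero hn]
      intro hcon
      apply hnd
      have h0 : (((b + n : ℤ)) : ZMod ℓ) = 0 := by
        push_cast at hcon ⊢
        linear_combination -hcon
      exact (ZMod.intCast_zmod_eq_zero_iff_dvd _ _).mp h0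
    rw [if_neg hε, add_zero] at hkey
    have hnu := nu_ineq hdc hlt hνn
    rw [← hbdef] at hnu
    have e1 := hfac.2 n ((b : ZMod ℓ)) hn
    have e2 := hfac.2 n (((b : ZMod ℓ)) - 1) hn
    omega

end CM
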